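/- arXiv:2406.03987 — 2 statements merged into one kernel-verified Lean document; each statement's English description precedes it below -/
import Mathlib

section
/- Lower bound criterion for the rank on weighted graphs: Let G be a connected weighted graph (possibly with loops), let d be a divisor on G, and let s ≥ 0 be an integer. For a vertex v set g(v) = ω(v) + m(v,v), and for an effective divisor e on G define the effective divisor e^deg by e^deg(v) = e(v) + min(e(v), g(v)). If for every effective divisor e on G of degree s the divisor d − e^deg is linearly equivalent (on G) to an effective divisor, then r_G(d) ≥ s, where r_G is the rank defined via the associated weightless loopless graph G^•. -/
open Finset

section Preliminaries

variable {V : Type} [Fintype V] [DecidableEq V]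

/-- The degree of a divisor on a graph with vertex set `V`. -/
def degDiv (d : V → ℤ) : ℤ := ∑ v, d v

/-- A divisor is effective if it is nonnegative at every vertex. -/
def Effective (d : V → ℤ) : Prop := ∀ v, 0 ≤ d v

/-- The principal divisor `t_Z` associated to a subset `Z` of vertices, for the
graph with edge multiplicity function `m`. -/
def tZ (m : V → V → ℕ) (Z : Finset V) : V → ℤ := fun v =>
  if v ∈ Z then -(∑ u ∈ Zᶜ, (m v u : ℤ)) else ∑ u ∈ Z, (m v u : ℤ)

/-- Two divisors are linearly equivalent if their difference lies in the subgroup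
generated by the divisors `t_Z`. -/
def LinEquiv (m : V → V → ℕ) (d d' : V → ℤ) : Prop :=
  d - d' ∈ AddSubgroup.closure (Set.range (tZ m))

/-- The simple graph associated to an edge multiplicity function `m`
(an edge between distinct `u`, `v` whenever `m u v > 0`; loops are discarded). -/
def assocGraph (m : V → V → ℕ) : SimpleGraph V where
  Adj u v := u ≠ v ∧ (0 < m u v ∨ 0 < m v u)
  symm := ⟨fun _ _ h => ⟨h.1.symm, h.2.symm⟩⟩
  loopless := ⟨fun _ h => h.1 rfl⟩

end Preliminaries

section Rank

variable {V : Type} [Fintype V] [DecidableEq V]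

/-- The set of integers `k` such that either `k = -1`, or `k ≥ 0` and for every
effective divisor `e` of degree `k`, the divisor `d - e` is linearly equivalent
to an effective divisor. -/
def bnRankSet (m : V → V → ℕ) (d : V → ℤ) : Set ℤ :=
  {k : ℤ | k = -1 ∨ (0 ≤ k ∧ ∀ e : V → ℤ, Effective e → degDiv e = k →
      ∃ f : V → ℤ, Effective f ∧ LinEquiv m (d - e) f)}

/-- The Baker–Norine rank of a divisor `d` on the weightless loopless multigraph
with edge multiplicity function `m`. -/
noncomputable def bnRank (m : V → V → ℕ) (d : V → ℤ) : ℤ := sSup (bnRankSet m d)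

end Rank

section Bullet

variable {V : Type} [Fintype V] [DecidableEq V]

/-- The vertex set of the associated weightless loopless graph `G^•`:
the original vertices together with `ω v + m v v` new vertices for each `v`. -/
abbrev BV (ω : V → ℕ) (m : V → V → ℕ) : Type := V ⊕ (Σ v : V, Fin (ω v + m v v))

/-- The edge multiplicity function of the associated weightless loopless graph `G^•`. -/
def bulletM (ω : V → ℕ) (m : V → V → ℕ) : BV ω m → BV ω m → ℕ
  | Sum.inl u, Sum.inl v => if u = v then 0 else m u v
  | Sum.inl u, Sum.inr ⟨v, _⟩ => if u = v then 2 else 0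
  | Sum.inr ⟨u, _⟩, Sum.inl v => if u = v then 2 else 0
  | Sum.inr _, Sum.inr _ => 0

/-- The extension-by-zero of a divisor on `G` to a divisor on `G^•`. -/
def iota (ω : V → ℕ) (m : V → V → ℕ) (d : V → ℤ) : BV ω m → ℤ
  | Sum.inl v => d v
  | Sum.inr _ => 0

/-- The rank of a divisor on a weighted graph with loops, defined as the
Baker–Norine rank of its extension by zero to `G^•`. -/
noncomputable def wRank (ω : V → ℕ) (m : V → V → ℕ) (d : V → ℤ) : ℤ :=
  bnRank (bulletM ω m) (iota ω m d)

end Bullet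

section EDeg

variable {V : Type} [Fintype V] [DecidableEq V]

/-- For an effective divisor `e`, the effective divisor `e^deg` defined by
`e^deg(v) = e(v) + min (e(v)) (g(v))` where `g(v) = ω(v) + m(v,v)`. -/
def edeg (ω : V → ℕ) (m : V → V → ℕ) (e : V → ℤ) : V → ℤ :=
  fun v => e v + min (e v) ((ω v + m v v : ℕ) : ℤ)

end EDeg

section AuxLemmas

variable {α : Type} [Fintype α] [DecidableEq α]

lemma sum_finset_eq (s : Finset α) (f : α → ℤ) :
    ∑ x ∈ s, f x = ∑ x, if x ∈ s then f x else 0 := by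
  rw [Finset.sum_ite_mem, Finset.univ_inter]

lemma degDiv_tZ (m : α → α → ℕ) (hsymm : ∀ u v, m u v = m v u) (Z : Finset α) :
    degDiv (tZ m Z) = 0 := by
  unfold degDiv tZ
  rw [← Finset.sum_add_sum_compl Z]
  have h1 : ∑ v ∈ Z, (if v ∈ Z then -(∑ u ∈ Zᶜ, (m v u : ℤ)) else ∑ u ∈ Z, (m v u : ℤ))
      = -∑ v ∈ Z, ∑ u ∈ Zᶜ, (m v u : ℤ) := by
    rw [← Finset.sum_neg_distrib]
    exact Finset.sum_congr rfl fun v hv => by rw [if_pos hv]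
  have h2 : ∑ v ∈ Zᶜ, (if v ∈ Z then -(∑ u ∈ Zᶜ, (m v u : ℤ)) else ∑ u ∈ Z, (m v u : ℤ))
      = ∑ v ∈ Zᶜ, ∑ u ∈ Z, (m v u : ℤ) :=
    Finset.sum_congr rfl fun v hv => by rw [if_neg (Finset.mem_compl.mp hv)]
  rw [h1, h2]
  have h3 : ∑ v ∈ Zᶜ, ∑ u ∈ Z, (m v u : ℤ) = ∑ v ∈ Z, ∑ u ∈ Zᶜ, (m v u : ℤ) := by
    rw [Finset.sum_comm]
    exact Finset.sum_congr rfl fun v _ => Finset.sum_congr rfl fun u _ => by rw [hsymm]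
  rw [h3]; ring

/-- The degree map as an additive monoid hom. -/
def degHom (α : Type) [Fintype α] : (α → ℤ) →+ ℤ where
  toFun := degDiv
  map_zero' := by simp [degDiv]
  map_add' a b := by simp [degDiv, Finset.sum_add_distrib]

lemma linEquiv_degDiv (m : α → α → ℕ) (hsymm : ∀ u v, m u v = m v u)
    {d1 d2 : α → ℤ} (h : LinEquiv m d1 d2) : degDiv d1 = degDiv d2 := by
  have hle : AddSubgroup.closure (Set.range (tZ m)) ≤ (degHom α).ker := by
    rw [AddSubgroup.closure_le]
    rintro x ⟨Z, rfl⟩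
    exact degDiv_tZ m hsymm Z
  have h0 : degHom α (d1 - d2) = 0 := hle h
  rw [map_sub] at h0
  have : degHom α d1 = degHom α d2 := by linarith [h0]
  exact this

end AuxLemmas

section BulletAux

variable {V : Type} [Fintype V] [DecidableEq V]

lemma bulletM_symm (ω : V → ℕ) (m : V → V → ℕ) (hsymm : ∀ u v, m u v = m v u) :
    ∀ a b, bulletM ω m a b = bulletM ω m b a := by
  rintro (u | ⟨u, i⟩) (v | ⟨v, j⟩)
  · show (if u = v then 0 else m u v) = (if v = u then 0 else m v u)
    rcases eq_or_ne u v with rfl | hne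
    · simp
    · rw [if_neg hne, if_neg hne.symm, hsymm]
  · show (if u = v then 2 else 0) = (if v = u then 2 else 0)
    simp [eq_comm]
  · show (if u = v then 2 else 0) = (if v = u then 2 else 0)
    simp [eq_comm]
  · rfl

/-- `iota` as an additive monoid hom. -/
def iotaHom (ω : V → ℕ) (m : V → V → ℕ) : (V → ℤ) →+ (BV ω m → ℤ) where
  toFun := iota ω m
  map_zero' := by funext w; cases w <;> rfl
  map_add' a b := by funext w; cases w <;> rfl

/-- The subset of `BV` corresponding to `Z ⊆ V`. -/
def bZ (ω : V → ℕ) (m : V → V → ℕ) (Z : Finset V) : Finset (BV ω m) :=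
  Finset.univ.filter (fun w => Sum.elim id Sigma.fst w ∈ Z)

lemma mem_bZ (ω : V → ℕ) (m : V → V → ℕ) (Z : Finset V) (w : BV ω m) :
    w ∈ bZ ω m Z ↔ Sum.elim id Sigma.fst w ∈ Z := by
  simp [bZ]

lemma iota_tZ (ω : V → ℕ) (m : V → V → ℕ) (Z : Finset V) :
    tZ (bulletM ω m) (bZ ω m Z) = iota ω m (tZ m Z) := by
  funext w
  cases w with
  | inl u =>
    show tZ (bulletM ω m) (bZ ω m Z) (Sum.inl u) = tZ m Z u
    unfold tZ
    by_cases hu : u ∈ Z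
    · rw [if_pos ((mem_bZ ω m Z (Sum.inl u)).mpr hu), if_pos hu]
      congr 1
      rw [sum_finset_eq ((bZ ω m Z)ᶜ), sum_finset_eq Zᶜ, Fintype.sum_sum_type]
      have h2 : ∑ p : (Σ v : V, Fin (ω v + m v v)),
          (if Sum.inr p ∈ (bZ ω m Z)ᶜ then (bulletM ω m (Sum.inl u) (Sum.inr p) : ℤ) else 0)
          = 0 := by
        apply Finset.sum_eq_zero
        rintro ⟨v, i⟩ _
        by_cases hv : v ∈ Z
        · rw [if_neg (by simp [mem_bZ, hv])]
        · rw [if_pos (by simp [mem_bZ, hv])]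
          show ((if u = v then 2 else 0 : ℕ) : ℤ) = 0
          rw [if_neg (fun (h : u = v) => hv (h ▸ hu))]; rfl
      rw [h2, add_zero]
      apply Finset.sum_congr rfl
      intro v _
      by_cases hv : v ∈ Z
      · rw [if_neg (by simp [mem_bZ, hv]), if_neg (by simp [hv])]
      · rw [if_pos (by simp [mem_bZ, hv]), if_pos (by simp [hv])]
        show ((if u = v then 0 else m u v : ℕ) : ℤ) = (m u v : ℤ)
        rw [if_neg (fun (h : u = v) => hv (h ▸ hu))]
    · rw [if_neg (fun hw => hu ((mem_bZ ω m Z (Sum.inl u)).mp hw)), if_neg hu]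
      rw [sum_finset_eq (bZ ω m Z), sum_finset_eq Z, Fintype.sum_sum_type]
      have h2 : ∑ p : (Σ v : V, Fin (ω v + m v v)),
          (if Sum.inr p ∈ bZ ω m Z then (bulletM ω m (Sum.inl u) (Sum.inr p) : ℤ) else 0)
          = 0 := by
        apply Finset.sum_eq_zero
        rintro ⟨v, i⟩ _
        by_cases hv : v ∈ Z
        · rw [if_pos (by simp [mem_bZ, hv])]
          show ((if u = v then 2 else 0 : ℕ) : ℤ) = 0
          rw [if_neg (fun (h : u = v) => hu (h ▸ hv))]; rfl
        · rw [if_neg (by simp [mem_bZ, hv])]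
      rw [h2, add_zero]
      apply Finset.sum_congr rfl
      intro v _
      by_cases hv : v ∈ Z
      · rw [if_pos (by simp [mem_bZ, hv]), if_pos (by simp [hv])]
        show ((if u = v then 0 else m u v : ℕ) : ℤ) = (m u v : ℤ)
        rw [if_neg (fun (h : u = v) => hu (h ▸ hv))]
      · rw [if_neg (by simp [mem_bZ, hv]), if_neg (by simp [hv])]
  | inr p =>
    obtain ⟨v0, i0⟩ := p
    show tZ (bulletM ω m) (bZ ω m Z) (Sum.inr ⟨v0, i0⟩) = 0
    unfold tZ
    by_cases hv : v0 ∈ Z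
    · rw [if_pos ((mem_bZ ω m Z (Sum.inr ⟨v0, i0⟩)).mpr hv)]
      rw [sum_finset_eq ((bZ ω m Z)ᶜ), Fintype.sum_sum_type]
      have h1 : ∑ v : V, (if Sum.inl v ∈ (bZ ω m Z)ᶜ
          then (bulletM ω m (Sum.inr ⟨v0, i0⟩) (Sum.inl v) : ℤ) else 0) = 0 := by
        apply Finset.sum_eq_zero
        intro v _
        by_cases hv' : v ∈ Z
        · rw [if_neg (by simp [mem_bZ, hv'])]
        · rw [if_pos (by simp [mem_bZ, hv'])]
          show ((if v0 = v then 2 else 0 : ℕ) : ℤ) = 0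
          rw [if_neg (fun (h : v0 = v) => hv' (h ▸ hv))]; rfl
      have h2 : ∑ q : (Σ v : V, Fin (ω v + m v v)), (if Sum.inr q ∈ (bZ ω m Z)ᶜ
          then (bulletM ω m (Sum.inr ⟨v0, i0⟩) (Sum.inr q) : ℤ) else 0) = 0 := by
        apply Finset.sum_eq_zero
        rintro ⟨v, i⟩ _
        split <;> rfl
      rw [h1, h2]; ring
    · rw [if_neg (fun hw => hv ((mem_bZ ω m Z (Sum.inr ⟨v0, i0⟩)).mp hw))]
      rw [sum_finset_eq (bZ ω m Z), Fintype.sum_sum_type]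
      have h1 : ∑ v : V, (if Sum.inl v ∈ bZ ω m Z
          then (bulletM ω m (Sum.inr ⟨v0, i0⟩) (Sum.inl v) : ℤ) else 0) = 0 := by
        apply Finset.sum_eq_zero
        intro v _
        by_cases hv' : v ∈ Z
        · rw [if_pos (by simp [mem_bZ, hv'])]
          show ((if v0 = v then 2 else 0 : ℕ) : ℤ) = 0
          rw [if_neg (fun (h : v0 = v) => hv (h ▸ hv'))]; rfl
        · rw [if_neg (by simp [mem_bZ, hv'])]
      have h2 : ∑ q : (Σ v : V, Fin (ω v + m v v)), (if Sum.inr q ∈ bZ ω m Z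
          then (bulletM ω m (Sum.inr ⟨v0, i0⟩) (Sum.inr q) : ℤ) else 0) = 0 := by
        apply Finset.sum_eq_zero
        rintro ⟨v, i⟩ _
        split <;> rfl
      rw [h1, h2]; ring

lemma iota_mem_closure (ω : V → ℕ) (m : V → V → ℕ) {x : V → ℤ}
    (hx : x ∈ AddSubgroup.closure (Set.range (tZ m))) :
    iota ω m x ∈ AddSubgroup.closure (Set.range (tZ (bulletM ω m))) := by
  have hmap : iota ω m x ∈ (AddSubgroup.closure (Set.range (tZ m))).map (iotaHom ω m) :=
    ⟨x, hx, rfl⟩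
  rw [AddMonoidHom.map_closure] at hmap
  refine AddSubgroup.closure_mono ?_ hmap
  rintro _ ⟨_, ⟨Z, rfl⟩, rfl⟩
  exact ⟨bZ ω m Z, iota_tZ ω m Z⟩

lemma tZ_singleton_inr_inl (ω : V → ℕ) (m : V → V → ℕ)
    (p : Σ v : V, Fin (ω v + m v v)) (v : V) :
    tZ (bulletM ω m) {Sum.inr p} (Sum.inl v) = if v = p.1 then 2 else 0 := by
  obtain ⟨u, i⟩ := p
  unfold tZ
  rw [if_neg (by simp)]
  rw [Finset.sum_singleton]
  show ((if v = u then 2 else 0 : ℕ) : ℤ) = if v = u then 2 else 0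
  split <;> rfl

lemma tZ_singleton_inr_inr (ω : V → ℕ) (m : V → V → ℕ)
    (p q : Σ v : V, Fin (ω v + m v v)) :
    tZ (bulletM ω m) {Sum.inr p} (Sum.inr q) = if q = p then -2 else 0 := by
  by_cases hpq : q = p
  · subst hpq
    unfold tZ
    rw [if_pos (Finset.mem_singleton_self _), if_pos rfl]
    have hcompl : ∑ u ∈ ({Sum.inr q}ᶜ : Finset (BV ω m)), (bulletM ω m (Sum.inr q) u : ℤ)
        = (∑ u : BV ω m, (bulletM ω m (Sum.inr q) u : ℤ))
          - (bulletM ω m (Sum.inr q) (Sum.inr q) : ℤ) := by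
      have := Finset.sum_compl_add_sum ({Sum.inr q} : Finset (BV ω m))
        (fun u => (bulletM ω m (Sum.inr q) u : ℤ))
      rw [Finset.sum_singleton] at this
      linarith [this]
    rw [hcompl]
    obtain ⟨u, i⟩ := q
    have hloop : (bulletM ω m (Sum.inr ⟨u, i⟩) (Sum.inr ⟨u, i⟩) : ℤ) = 0 := rfl
    have huniv : ∑ w : BV ω m, (bulletM ω m (Sum.inr ⟨u, i⟩) w : ℤ) = 2 := by
      rw [Fintype.sum_sum_type]
      have h1 : ∑ v : V, (bulletM ω m (Sum.inr ⟨u, i⟩) (Sum.inl v) : ℤ) = 2 := by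
        have : ∀ v : V, (bulletM ω m (Sum.inr ⟨u, i⟩) (Sum.inl v) : ℤ)
            = if u = v then 2 else 0 := by
          intro v
          show ((if u = v then 2 else 0 : ℕ) : ℤ) = if u = v then 2 else 0
          split <;> rfl
        rw [Finset.sum_congr rfl (fun v _ => this v), Finset.sum_ite_eq]
        simp
      have h2 : ∑ q' : (Σ v : V, Fin (ω v + m v v)),
          (bulletM ω m (Sum.inr ⟨u, i⟩) (Sum.inr q') : ℤ) = 0 := by
        apply Finset.sum_eq_zero
        rintro ⟨v, j⟩ _
        rfl
      rw [h1, h2]; ring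
    rw [huniv, hloop]
    norm_num
  · unfold tZ
    rw [if_neg (by simp [hpq]), Finset.sum_singleton, if_neg hpq]
    obtain ⟨u, i⟩ := q
    rfl

end BulletAux


/-- **Lower bound criterion for the rank on weighted graphs.** -/
theorem wRank_lower_bound {V : Type} [Fintype V] [DecidableEq V]
    (ω : V → ℕ) (m : V → V → ℕ) (hsymm : ∀ u v, m u v = m v u)
    (hconn : (assocGraph m).Connected)
    (d : V → ℤ) (s : ℤ) (hs : 0 ≤ s)
    (h : ∀ e : V → ℤ, Effective e → degDiv e = s →
      ∃ f : V → ℤ, Effective f ∧ LinEquiv m (d - edeg ω m e) f) :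
    s ≤ wRank ω m d := by
  classical
  have hne : Nonempty V := hconn.nonempty
  have hmem : s ∈ bnRankSet (bulletM ω m) (iota ω m d) := by
    right
    refine ⟨hs, ?_⟩
    intro E hE hdE
    -- the pushdown divisor e on V
    set e : V → ℤ := fun v => E (Sum.inl v) + ∑ i : Fin (ω v + m v v), E (Sum.inr ⟨v, i⟩)
      with he_def
    have he_eff : Effective e := by
      intro v
      have h1 : (0 : ℤ) ≤ ∑ i : Fin (ω v + m v v), E (Sum.inr ⟨v, i⟩) :=
        Finset.sum_nonneg fun i _ => hE _
      have h2 := hE (Sum.inl v)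
      simp only [he_def]
      linarith
    have he_deg : degDiv e = s := by
      rw [← hdE]
      unfold degDiv
      rw [Fintype.sum_sum_type, ← Finset.univ_sigma_univ, Finset.sum_sigma]
      simp only [he_def]
      rw [Finset.sum_add_distrib]
    obtain ⟨f, hf_eff, hf_lin⟩ := h e he_eff he_deg
    -- the correction amounts
    set k : (Σ v : V, Fin (ω v + m v v)) → ℕ := fun p => ((E (Sum.inr p)).toNat + 1) / 2
      with hk_def
    set T : BV ω m → ℤ :=
      ∑ p : (Σ v : V, Fin (ω v + m v v)), (k p : ℤ) • tZ (bulletM ω m) {Sum.inr p}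
      with hT_def
    have hT_mem : T ∈ AddSubgroup.closure (Set.range (tZ (bulletM ω m))) :=
      AddSubgroup.sum_mem _ fun p _ =>
        AddSubgroup.zsmul_mem _ (AddSubgroup.subset_closure (Set.mem_range_self _)) _
    have hT_inl : ∀ v : V, T (Sum.inl v)
        = 2 * ((∑ i : Fin (ω v + m v v), k ⟨v, i⟩ : ℕ) : ℤ) := by
      intro v
      rw [hT_def, Finset.sum_apply]
      have : ∀ p : (Σ v : V, Fin (ω v + m v v)),
          ((k p : ℤ) • tZ (bulletM ω m) {Sum.inr p}) (Sum.inl v)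
          = (k p : ℤ) * (if v = p.1 then 2 else 0) := by
        intro p
        rw [Pi.smul_apply, tZ_singleton_inr_inl, smul_eq_mul]
      rw [Finset.sum_congr rfl fun p _ => this p]
      rw [← Finset.univ_sigma_univ, Finset.sum_sigma]
      have hinner : ∀ u : V, ∑ i : Fin (ω u + m u u), (k ⟨u, i⟩ : ℤ) * (if v = u then 2 else 0)
          = if v = u then (∑ i : Fin (ω u + m u u), 2 * (k ⟨u, i⟩ : ℤ)) else 0 := by
        intro u
        by_cases hvu : v = u
        · simp [hvu, mul_comm]
        · simp [hvu]
      rw [Finset.sum_congr rfl fun u _ => hinner u, Finset.sum_ite_eq]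
      simp [Finset.mul_sum]
    have hT_inr : ∀ p : (Σ v : V, Fin (ω v + m v v)),
        T (Sum.inr p) = -(2 * (k p : ℤ)) := by
      intro p
      rw [hT_def, Finset.sum_apply]
      have : ∀ q : (Σ v : V, Fin (ω v + m v v)),
          ((k q : ℤ) • tZ (bulletM ω m) {Sum.inr q}) (Sum.inr p)
          = if p = q then (k q : ℤ) * (-2) else 0 := by
        intro q
        rw [Pi.smul_apply, tZ_singleton_inr_inr, smul_eq_mul]
        split <;> ring
      rw [Finset.sum_congr rfl fun q _ => this q, Finset.sum_ite_eq]
      simp [mul_comm]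
    -- the witness divisor
    set F : BV ω m → ℤ :=
      iota ω m f + (iota ω m d - E - T - iota ω m (d - edeg ω m e)) with hF_def
    refine ⟨F, ?_, ?_⟩
    · -- effectiveness
      intro w
      cases w with
      | inl v =>
        have hFv : F (Sum.inl v) = f v + (d v - E (Sum.inl v) - T (Sum.inl v)
            - (d v - edeg ω m e v)) := by
          simp [hF_def, iota]
        rw [hFv, hT_inl v]
        set n : Fin (ω v + m v v) → ℕ := fun i => (E (Sum.inr ⟨v, i⟩)).toNat with hn_def
        have hEn : ∀ i, E (Sum.inr ⟨v, i⟩) = (n i : ℤ) := fun i =>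
          (Int.toNat_of_nonneg (hE _)).symm
        have hkn : ∀ i : Fin (ω v + m v v), k ⟨v, i⟩ = (n i + 1) / 2 := by
          intro i
          simp [hk_def, hn_def]
        set K : ℕ := ∑ i : Fin (ω v + m v v), k ⟨v, i⟩ with hK_def
        set N : ℕ := ∑ i : Fin (ω v + m v v), n i with hN_def
        set R : ℕ := ∑ i : Fin (ω v + m v v), n i % 2 with hR_def
        have h1 : 2 * K ≤ N + R := by
          rw [hK_def, hN_def, hR_def, Finset.mul_sum, ← Finset.sum_add_distrib]
          refine Finset.sum_le_sum fun i _ => ?_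
          rw [hkn i]
          omega
        have h2 : R ≤ ω v + m v v := by
          calc R ≤ ∑ _i : Fin (ω v + m v v), 1 :=
                Finset.sum_le_sum fun i _ => by omega
            _ = ω v + m v v := by simp
        have h3 : R ≤ N := Finset.sum_le_sum fun i _ => Nat.mod_le _ _
        have he_v : e v = E (Sum.inl v) + (N : ℤ) := by
          simp only [he_def, hN_def]
          rw [Finset.sum_congr rfl fun i _ => hEn i]
          push_cast
          ring
        have hEv0 : (0 : ℤ) ≤ E (Sum.inl v) := hE _
        have hfv0 : (0 : ℤ) ≤ f v := hf_eff v
        have hed : edeg ω m e v = e v + min (e v) ((ω v + m v v : ℕ) : ℤ) := rfl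
        omega
      | inr p =>
        have hFp : F (Sum.inr p) = -(E (Sum.inr p)) - T (Sum.inr p) := by
          simp [hF_def, iota]
        rw [hFp, hT_inr p]
        have hkp : k p = ((E (Sum.inr p)).toNat + 1) / 2 := by simp [hk_def]
        have hEp : E (Sum.inr p) = ((E (Sum.inr p)).toNat : ℤ) :=
          (Int.toNat_of_nonneg (hE _)).symm
        rw [hkp]
        omega
    · -- linear equivalence
      show (iota ω m d - E) - F ∈ AddSubgroup.closure (Set.range (tZ (bulletM ω m)))
      have hiota_sub : iota ω m ((d - edeg ω m e) - f)
          = iota ω m (d - edeg ω m e) - iota ω m f := map_sub (iotaHom ω m) _ _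
      have heq : (iota ω m d - E) - F = T + iota ω m ((d - edeg ω m e) - f) := by
        rw [hiota_sub, hF_def]
        abel
      rw [heq]
      exact AddSubgroup.add_mem _ hT_mem (iota_mem_closure ω m hf_lin)
  have hbdd : BddAbove (bnRankSet (bulletM ω m) (iota ω m d)) := by
    refine ⟨max (degDiv (iota ω m d)) (-1), ?_⟩
    rintro x (rfl | ⟨hx0, hx⟩)
    · exact le_max_right _ _
    · refine le_trans ?_ (le_max_left _ _)
      obtain ⟨v0⟩ := hne
      set e : BV ω m → ℤ := fun w => if w = Sum.inl v0 then x else 0 with he_def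
      have he_eff : Effective e := by
        intro w
        simp only [he_def]
        split <;> simp [hx0]
      have he_deg : degDiv e = x := by
        simp [degDiv, he_def, Finset.sum_ite_eq']
      obtain ⟨f, hf_eff, hf_lin⟩ := hx e he_eff he_deg
      have hdeg := linEquiv_degDiv (bulletM ω m) (bulletM_symm ω m hsymm) hf_lin
      have hsub : degDiv (iota ω m d - e) = degDiv (iota ω m d) - x := by
        simp [degDiv, Finset.sum_sub_distrib, ← he_deg]
      have hfpos : 0 ≤ degDiv f := Finset.sum_nonneg fun w _ => hf_eff w
      omega
  unfold wRank bnRank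
  exact le_csSup hbdd hmem
end

section
/- The extension-by-zero map ι : Div(G) → Div(G^•) induces an injective homomorphism on Picard groups: for any two divisors d, d' on a connected weighted graph G (possibly with loops), d is linearly equivalent to d' on G if and only if ι(d) is linearly equivalent to ι(d') on the associated weightless loopless graph G^•. -/
open Finset

section MyAux
variable {V : Type} [Fintype V] [DecidableEq V]

variable {V : Type} [Fintype V] [DecidableEq V]

/-- The Laplacian-image map. -/
def Lmap (m : V → V → ℕ) (x : V → ℤ) : V → ℤ :=
  fun v => (∑ z, x z * m v z) - x v * ∑ u, (m v u : ℤ)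

lemma tZ_eq (m : V → V → ℕ) (Z : Finset V) (v : V) :
    tZ m Z v = (∑ u ∈ Z, (m v u : ℤ)) - if v ∈ Z then ∑ u, (m v u : ℤ) else 0 := by
  unfold tZ
  by_cases h : v ∈ Z
  · rw [if_pos h, if_pos h]
    have := Finset.sum_add_sum_compl Z (fun u => (m v u : ℤ))
    linarith
  · rw [if_neg h, if_neg h]; ring

lemma Lmap_eq_sum (m : V → V → ℕ) (x : V → ℤ) :
    Lmap m x = ∑ z, x z • tZ m {z} := by
  funext v
  rw [Finset.sum_apply]
  simp only [Pi.smul_apply, smul_eq_mul, tZ_eq, Finset.sum_singleton,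
    Finset.mem_singleton, mul_sub, Finset.sum_sub_distrib, mul_ite, mul_zero]
  rw [Finset.sum_ite_eq Finset.univ v (fun z => x z * ∑ u, (m v u : ℤ))]
  simp [Lmap]

lemma Lmap_tZ (m : V → V → ℕ) (Z : Finset V) :
    Lmap m (fun z => if z ∈ Z then 1 else 0) = tZ m Z := by
  funext v
  rw [tZ_eq, Lmap]
  simp [ite_mul, Finset.sum_ite_mem, Finset.univ_inter]

lemma Lmap_add (m : V → V → ℕ) (x y : V → ℤ) :
    Lmap m (x + y) = Lmap m x + Lmap m y := by
  funext v
  simp [Lmap, add_mul, Finset.sum_add_distrib]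
  ring

lemma Lmap_neg (m : V → V → ℕ) (x : V → ℤ) : Lmap m (-x) = -(Lmap m x) := by
  funext v
  simp [Lmap, Finset.sum_neg_distrib]
  ring

lemma mem_closure_iff_Lmap (m : V → V → ℕ) (d : V → ℤ) :
    d ∈ AddSubgroup.closure (Set.range (tZ m)) ↔ ∃ x, Lmap m x = d := by
  constructor
  · intro h
    induction h using AddSubgroup.closure_induction with
    | mem g hg =>
      obtain ⟨Z, rfl⟩ := hg
      exact ⟨_, Lmap_tZ m Z⟩
    | zero => exact ⟨0, by funext v; simp [Lmap]⟩
    | add a b _ _ ha hb =>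
      obtain ⟨xa, hxa⟩ := ha; obtain ⟨xb, hxb⟩ := hb
      exact ⟨xa + xb, by rw [Lmap_add, hxa, hxb]⟩
    | neg a _ ha =>
      obtain ⟨xa, hxa⟩ := ha
      exact ⟨-xa, by rw [Lmap_neg, hxa]⟩
  · rintro ⟨x, rfl⟩
    rw [Lmap_eq_sum]
    exact AddSubgroup.sum_mem _ fun z _ =>
      AddSubgroup.zsmul_mem _ (AddSubgroup.subset_closure (Set.mem_range_self {z})) _

lemma Lmap_bullet_inl (ω : V → ℕ) (m : V → V → ℕ) (y : BV ω m → ℤ) (v : V) :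
    Lmap (bulletM ω m) y (Sum.inl v) =
      Lmap m (fun u => y (Sum.inl u)) v
        - 2 * ((ω v : ℤ) + (m v v : ℤ)) * y (Sum.inl v)
        + 2 * ∑ i : Fin (ω v + m v v), y (Sum.inr ⟨v, i⟩) := by
  have h1 : ∑ u : V, y (Sum.inl u) * (bulletM ω m (Sum.inl v) (Sum.inl u) : ℤ)
      = (∑ u, y (Sum.inl u) * (m v u : ℤ)) - y (Sum.inl v) * (m v v : ℤ) := by
    have : ∀ u : V, y (Sum.inl u) * (bulletM ω m (Sum.inl v) (Sum.inl u) : ℤ)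
        = y (Sum.inl u) * (m v u : ℤ) -
          (if v = u then y (Sum.inl u) * (m v u : ℤ) else 0) := by
      intro u
      simp only [bulletM]
      split <;> rename_i h
      · subst h; push_cast; ring
      · ring
    rw [Finset.sum_congr rfl fun u _ => this u, Finset.sum_sub_distrib,
      Finset.sum_ite_eq Finset.univ v (fun u => y (Sum.inl u) * (m v u : ℤ))]
    simp
  have h2 : ∑ p : (Σ u : V, Fin (ω u + m u u)),
        y (Sum.inr p) * (bulletM ω m (Sum.inl v) (Sum.inr p) : ℤ)
      = 2 * ∑ i : Fin (ω v + m v v), y (Sum.inr ⟨v, i⟩) := by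
    rw [← Finset.univ_sigma_univ, Finset.sum_sigma]
    have : ∀ u : V, (∑ i : Fin (ω u + m u u),
          y (Sum.inr ⟨u, i⟩) * (bulletM ω m (Sum.inl v) (Sum.inr ⟨u, i⟩) : ℤ))
        = if v = u then 2 * ∑ i : Fin (ω u + m u u), y (Sum.inr ⟨u, i⟩) else 0 := by
      intro u
      simp only [bulletM]
      split <;> simp [Finset.mul_sum, mul_comm]
    rw [Finset.sum_congr rfl fun u _ => this u, Finset.sum_ite_eq]
    simp
  have h3a : ∑ u : V, (bulletM ω m (Sum.inl v) (Sum.inl u) : ℤ)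
      = (∑ u, (m v u : ℤ)) - (m v v : ℤ) := by
    have : ∀ u : V, (bulletM ω m (Sum.inl v) (Sum.inl u) : ℤ)
        = (m v u : ℤ) - (if v = u then (m v u : ℤ) else 0) := by
      intro u
      simp only [bulletM]
      split <;> rename_i h
      · subst h; push_cast; ring
      · ring
    rw [Finset.sum_congr rfl fun u _ => this u, Finset.sum_sub_distrib,
      Finset.sum_ite_eq Finset.univ v (fun u => (m v u : ℤ))]
    simp
  have h3b : ∑ p : (Σ u : V, Fin (ω u + m u u)),
        (bulletM ω m (Sum.inl v) (Sum.inr p) : ℤ)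
      = 2 * ((ω v : ℤ) + (m v v : ℤ)) := by
    rw [← Finset.univ_sigma_univ, Finset.sum_sigma]
    have : ∀ u : V, (∑ _i : Fin (ω u + m u u),
          (bulletM ω m (Sum.inl v) (Sum.inr ⟨u, _i⟩) : ℤ))
        = if v = u then 2 * ((ω u : ℤ) + (m u u : ℤ)) else 0 := by
      intro u
      simp only [bulletM]
      split <;> simp [Finset.sum_const, mul_comm] <;> push_cast <;> ring
    rw [Finset.sum_congr rfl fun u _ => this u, Finset.sum_ite_eq]
    simp
  simp only [Lmap, Fintype.sum_sum_type]
  rw [h1, h2, h3a, h3b]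
  ring

lemma Lmap_bullet_inr (ω : V → ℕ) (m : V → V → ℕ) (y : BV ω m → ℤ) (v : V)
    (i : Fin (ω v + m v v)) :
    Lmap (bulletM ω m) y (Sum.inr ⟨v, i⟩)
      = 2 * y (Sum.inl v) - 2 * y (Sum.inr ⟨v, i⟩) := by
  have h1 : ∑ u : V, y (Sum.inl u) * (bulletM ω m (Sum.inr ⟨v, i⟩) (Sum.inl u) : ℤ)
      = 2 * y (Sum.inl v) := by
    have : ∀ u : V, y (Sum.inl u) * (bulletM ω m (Sum.inr ⟨v, i⟩) (Sum.inl u) : ℤ)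
        = if v = u then 2 * y (Sum.inl u) else 0 := by
      intro u
      simp only [bulletM]
      split <;> simp <;> ring
    rw [Finset.sum_congr rfl fun u _ => this u, Finset.sum_ite_eq]
    simp
  have h2 : ∑ p : (Σ u : V, Fin (ω u + m u u)),
        y (Sum.inr p) * (bulletM ω m (Sum.inr ⟨v, i⟩) (Sum.inr p) : ℤ) = 0 := by
    apply Finset.sum_eq_zero
    rintro ⟨u, j⟩ _
    simp [bulletM]
  have h3a : ∑ u : V, (bulletM ω m (Sum.inr ⟨v, i⟩) (Sum.inl u) : ℤ) = 2 := by
    have : ∀ u : V, (bulletM ω m (Sum.inr ⟨v, i⟩) (Sum.inl u) : ℤ)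
        = if v = u then 2 else 0 := by
      intro u
      simp only [bulletM]
      split <;> simp
    rw [Finset.sum_congr rfl fun u _ => this u, Finset.sum_ite_eq]
    simp
  have h3b : ∑ p : (Σ u : V, Fin (ω u + m u u)),
        (bulletM ω m (Sum.inr ⟨v, i⟩) (Sum.inr p) : ℤ) = 0 := by
    apply Finset.sum_eq_zero
    rintro ⟨u, j⟩ _
    simp [bulletM]
  simp only [Lmap, Fintype.sum_sum_type]
  rw [h1, h2, h3a, h3b]
  ring

end MyAux

/-- The extension-by-zero map induces an injective homomorphism on Picard
groups: `d ~ d'` on `G` iff `ι(d) ~ ι(d')` on `G^•`. -/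
theorem linEquiv_iff_iota_linEquiv {V : Type} [Fintype V] [DecidableEq V]
    (ω : V → ℕ) (m : V → V → ℕ) (hsymm : ∀ u v, m u v = m v u)
    (hconn : (assocGraph m).Connected)
    (d d' : V → ℤ) :
    LinEquiv m d d' ↔ LinEquiv (bulletM ω m) (iota ω m d) (iota ω m d') := by
  unfold LinEquiv
  rw [mem_closure_iff_Lmap, mem_closure_iff_Lmap]
  constructor
  · rintro ⟨x, hx⟩
    refine ⟨Sum.elim x (fun p => x p.1), funext fun w => ?_⟩
    cases w with
    | inl v =>
      rw [Lmap_bullet_inl]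
      have hxv := congrFun hx v
      simp only [Sum.elim_inl, Sum.elim_inr, Finset.sum_const, Finset.card_univ,
        Fintype.card_fin, nsmul_eq_mul, Pi.sub_apply, iota] at hxv ⊢
      rw [show (fun u => x u) = x from rfl, hxv]
      push_cast
      ring
    | inr p =>
      obtain ⟨v, i⟩ := p
      rw [Lmap_bullet_inr]
      simp [iota]
  · rintro ⟨y, hy⟩
    have hfix : ∀ (v : V) (i : Fin (ω v + m v v)), y (Sum.inr ⟨v, i⟩) = y (Sum.inl v) := by
      intro v i
      have h := congrFun hy (Sum.inr ⟨v, i⟩)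
      rw [Lmap_bullet_inr] at h
      simp only [Pi.sub_apply, iota] at h
      linarith
    refine ⟨fun v => y (Sum.inl v), funext fun v => ?_⟩
    have h := congrFun hy (Sum.inl v)
    rw [Lmap_bullet_inl] at h
    rw [Finset.sum_congr rfl (fun i _ => hfix v i), Finset.sum_const, Finset.card_univ,
      Fintype.card_fin, nsmul_eq_mul] at h
    simp only [Pi.sub_apply, iota] at h ⊢
    push_cast at h
    linarith [h]
end
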